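/- Let a, b, n ∈ ℝ³ and let p : ℝ³ → ℝ³ be the infinitesimal rigid motion p(x) = a + b × x. Let A : ℝ³ → M₃(ℝ) be a differentiable matrix field with tr A(x) = 0 for all x. Then at every point x, curl(y ↦ A(y)ᵀ p(y))(x) · n = p(x) · (curl A)(x) · n − n · A(x) · b; equivalently, since curl p = 2b, p · (curl A) · n = curl(p · A) · n + (1/2) n · A · (curl p). -/

import Mathlib

open Matrix MeasureTheory

noncomputable section

abbrev V3 := Fin 3 → ℝ
abbrev M3 := Matrix (Fin 3) (Fin 3) ℝ

/-- The Levi-Civita symbol in three dimensions. -/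
def eps (i j k : Fin 3) : ℝ :=
  (((i : ℕ) : ℝ) - ((j : ℕ) : ℝ)) * (((j : ℕ) : ℝ) - ((k : ℕ) : ℝ)) *
    (((k : ℕ) : ℝ) - ((i : ℕ) : ℝ)) / 2

/-- Partial derivative `∂ₘ f (x)`. -/
def pd (m : Fin 3) (f : V3 → ℝ) (x : V3) : ℝ := fderiv ℝ f x (Pi.single m 1)

/-- Jacobian matrix `(grad u)_{ij} = ∂_j u_i`. -/
def gradV (u : V3 → V3) (x : V3) : M3 := Matrix.of fun i j => pd j (fun y => u y i) x

/-- Divergence of a vector field. -/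
def divV (u : V3 → V3) (x : V3) : ℝ := ∑ i, pd i (fun y => u y i) x

/-- Curl of a vector field: `(curl u)_k = Σ_{m,j} ε_{kmj} ∂_m u_j`. -/
def curlV (u : V3 → V3) (x : V3) : V3 := fun k => ∑ m, ∑ j, eps k m j * pd m (fun y => u y j) x

/-- Row-wise curl of a matrix field: `(curl A)_{ik} = Σ_{m,j} ε_{kmj} ∂_m A_{ij}`. -/
def curlM (A : V3 → M3) (x : V3) : M3 :=
  Matrix.of fun i k => ∑ m, ∑ j, eps k m j * pd m (fun y => A y i j) x

/-- Row-wise divergence of a matrix field: `(div A)_i = Σ_j ∂_j A_{ij}`. -/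
def divM (A : V3 → M3) (x : V3) : V3 := fun i => ∑ j, pd j (fun y => A y i j) x

/-- Symmetric part of a matrix. -/
def symM (M : M3) : M3 := (2⁻¹ : ℝ) • (M + Mᵀ)

/-- Skew-symmetric part of a matrix. -/
def skwM (M : M3) : M3 := (2⁻¹ : ℝ) • (M - Mᵀ)

/-- Linearized deformation `def u = sym grad u`. -/
def defV (u : V3 → V3) (x : V3) : M3 := symM (gradV u x)

/-- `(mskw v)_{ij} = Σ_k ε_{ikj} v_k`, so that `(mskw v) w = v × w`. -/
def mskw (v : V3) : M3 := Matrix.of fun i j => ∑ k, eps i k j * v k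

/-- `vskw = mskw⁻¹ ∘ skw`. -/
def vskw (M : M3) : V3 := fun l => 2⁻¹ * ∑ i, ∑ j, eps i l j * skwM M i j

/-- Frobenius pairing `A : B = Σ_{i,j} A_{ij} B_{ij}`. -/
def frob (A B : M3) : ℝ := ∑ i, ∑ j, A i j * B i j

/-- Outer product `(a ⊗ b)_{ij} = a_i b_j`. -/
def outer (a b : V3) : M3 := Matrix.of fun i j => a i * b j

/-- Row-wise cross product of a matrix with a vector:
`(M × n)_{ij} = Σ_{k,m} ε_{jkm} M_{ik} n_m`. -/
def mcross (M : M3) (n : V3) : M3 :=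
  Matrix.of fun i j => ∑ k, ∑ m, eps j k m * M i k * n m

/-- `𝒮(M) = Mᵀ − tr(M) I`. -/
def Sop (M : M3) : M3 := Mᵀ - Matrix.trace M • (1 : M3)

/-- Incompatibility operator `inc σ = curl ((curl σ)ᵀ)` (row-wise curl). -/
def incM (σ : V3 → M3) (x : V3) : M3 := curlM (fun y => (curlM σ y)ᵀ) x


section PDLemmas

lemma pd_const (m : Fin 3) (x : V3) (c : ℝ) : pd m (fun _ => c) x = 0 := by
  simp [pd]

lemma pd_add {f g : V3 → ℝ} {x : V3} (m : Fin 3) (hf : DifferentiableAt ℝ f x)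
    (hg : DifferentiableAt ℝ g x) :
    pd m (fun y => f y + g y) x = pd m f x + pd m g x := by
  simp [pd, fderiv_fun_add hf hg]

lemma pd_sub {f g : V3 → ℝ} {x : V3} (m : Fin 3) (hf : DifferentiableAt ℝ f x)
    (hg : DifferentiableAt ℝ g x) :
    pd m (fun y => f y - g y) x = pd m f x - pd m g x := by
  simp [pd, fderiv_fun_sub hf hg]

lemma pd_mul {f g : V3 → ℝ} {x : V3} (m : Fin 3) (hf : DifferentiableAt ℝ f x)
    (hg : DifferentiableAt ℝ g x) :
    pd m (fun y => f y * g y) x = pd m f x * g x + f x * pd m g x := by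
  simp [pd, fderiv_fun_mul hf hg]; ring

lemma pd_const_mul {f : V3 → ℝ} {x : V3} (m : Fin 3) (c : ℝ) (hf : DifferentiableAt ℝ f x) :
    pd m (fun y => c * f y) x = c * pd m f x := by
  simp [pd, fderiv_const_mul hf]

lemma diff_coord (k : Fin 3) : Differentiable ℝ (fun y : V3 => y k) :=
  (ContinuousLinearMap.proj (R := ℝ) (φ := fun _ : Fin 3 => ℝ) k).differentiable

lemma pd_coord (m k : Fin 3) (x : V3) : pd m (fun y => y k) x = if k = m then 1 else 0 := by
  have h : fderiv ℝ (fun y : V3 => y k) x = ContinuousLinearMap.proj k :=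
    (ContinuousLinearMap.proj (R := ℝ) (φ := fun _ : Fin 3 => ℝ) k).fderiv
  simp [pd, h, Pi.single_apply]

end PDLemmas

/-- Lemma 5.2 (pointwise): for the rigid motion `p(x) = a + b × x` and a differentiable
trace-free matrix field `A`, `curl(Aᵀp) · n = p · (curl A) · n − n · A · b` at every point;
since `curl p = 2b` this is `p·(curl A)·n = curl(p·A)·n + (1/2) n·A·(curl p)`. -/
theorem curl_rigid_motion_pairing (a b n : V3) (p : V3 → V3)
    (hp : ∀ x, p x = a + crossProduct b x)
    (A : V3 → M3) (hA : ∀ i j, Differentiable ℝ fun y => A y i j)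
    (htr : ∀ x, Matrix.trace (A x) = 0) :
    ∀ x, curlV (fun y => (A y)ᵀ *ᵥ p y) x ⬝ᵥ n =
      p x ⬝ᵥ (curlM A x *ᵥ n) - n ⬝ᵥ (A x *ᵥ b) := by
  intro x
  -- explicit component forms of p
  have hp0 : (fun y => p y 0) = fun y => a 0 + (b 1 * y 2 - b 2 * y 1) := by
    funext y; rw [hp]; simp [cross_apply]
  have hp1 : (fun y => p y 1) = fun y => a 1 + (b 2 * y 0 - b 0 * y 2) := by
    funext y; rw [hp]; simp [cross_apply]
  have hp2 : (fun y => p y 2) = fun y => a 2 + (b 0 * y 1 - b 1 * y 0) := by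
    funext y; rw [hp]; simp [cross_apply]
  have hdaff : ∀ c d e (i j : Fin 3), DifferentiableAt ℝ (fun y : V3 => c + (d * y i - e * y j)) x :=
    fun c d e i j => (differentiableAt_const _).add
      (((differentiableAt_const _).mul ((diff_coord i).differentiableAt)).sub
        ((differentiableAt_const _).mul ((diff_coord j).differentiableAt)))
  have hd0 : DifferentiableAt ℝ (fun y => p y 0) x := by rw [hp0]; exact hdaff _ _ _ _ _
  have hd1 : DifferentiableAt ℝ (fun y => p y 1) x := by rw [hp1]; exact hdaff _ _ _ _ _
  have hd2 : DifferentiableAt ℝ (fun y => p y 2) x := by rw [hp2]; exact hdaff _ _ _ _ _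
  have qaff : ∀ m c d e (i j : Fin 3), pd m (fun y : V3 => c + (d * y i - e * y j)) x
      = d * (if i = m then 1 else 0) - e * (if j = m then 1 else 0) := by
    intro m c d e i j
    rw [pd_add m (differentiableAt_const _)
        (((differentiableAt_const _).fun_mul ((diff_coord i).differentiableAt)).fun_sub
          ((differentiableAt_const _).fun_mul ((diff_coord j).differentiableAt))),
      pd_const,
      pd_sub m ((differentiableAt_const _).fun_mul ((diff_coord i).differentiableAt))
        ((differentiableAt_const _).fun_mul ((diff_coord j).differentiableAt)),
      pd_const_mul m _ ((diff_coord i).differentiableAt),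
      pd_const_mul m _ ((diff_coord j).differentiableAt),
      pd_coord, pd_coord]
    ring
  have q0 : ∀ m, pd m (fun y => p y 0) x
      = b 1 * (if (2 : Fin 3) = m then 1 else 0) - b 2 * (if (1 : Fin 3) = m then 1 else 0) := by
    intro m; rw [hp0]; exact qaff m _ _ _ _ _
  have q1 : ∀ m, pd m (fun y => p y 1) x
      = b 2 * (if (0 : Fin 3) = m then 1 else 0) - b 0 * (if (2 : Fin 3) = m then 1 else 0) := by
    intro m; rw [hp1]; exact qaff m _ _ _ _ _
  have q2 : ∀ m, pd m (fun y => p y 2) x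
      = b 0 * (if (1 : Fin 3) = m then 1 else 0) - b 1 * (if (0 : Fin 3) = m then 1 else 0) := by
    intro m; rw [hp2]; exact qaff m _ _ _ _ _
  have key : ∀ (j m : Fin 3), pd m (fun y => ((A y)ᵀ *ᵥ p y) j) x
      = pd m (fun y => A y 0 j) x * p x 0 + A x 0 j * pd m (fun y => p y 0) x
        + (pd m (fun y => A y 1 j) x * p x 1 + A x 1 j * pd m (fun y => p y 1) x)
        + (pd m (fun y => A y 2 j) x * p x 2 + A x 2 j * pd m (fun y => p y 2) x) := by
    intro j m
    have hfun : (fun y => ((A y)ᵀ *ᵥ p y) j)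
        = fun y => A y 0 j * p y 0 + A y 1 j * p y 1 + A y 2 j * p y 2 := by
      funext y
      simp [Matrix.mulVec, dotProduct, Fin.sum_univ_three, Matrix.transpose_apply]
    rw [hfun,
      pd_add m ((((hA 0 j) x).fun_mul hd0).fun_add (((hA 1 j) x).fun_mul hd1)) (((hA 2 j) x).fun_mul hd2),
      pd_add m (((hA 0 j) x).fun_mul hd0) (((hA 1 j) x).fun_mul hd1),
      pd_mul m ((hA 0 j) x) hd0, pd_mul m ((hA 1 j) x) hd1, pd_mul m ((hA 2 j) x) hd2]
  have htr' : A x 0 0 + A x 1 1 + A x 2 2 = 0 := by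
    have := htr x
    simpa [Matrix.trace, Matrix.diag, Fin.sum_univ_three] using this
  simp only [curlV, dotProduct, Fin.sum_univ_three]
  simp only [key, q0, q1, q2]
  simp only [curlM, Matrix.mulVec, dotProduct, Matrix.of_apply, Fin.sum_univ_three]
  norm_num [eps, Fin.ext_iff]
  linear_combination (n 0 * b 0 + n 1 * b 1 + n 2 * b 2) * htr'
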